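/- arXiv:math/9706207 — 2 statements merged into one kernel-verified Lean document; each statement's English description precedes it below -/
import Mathlib

section
/- Let δ < κ be infinite cardinals such that κ is δ-Jónsson, let L be a countable first-order language, let M be an L-structure whose universe has cardinality κ, let e : κ → M be an injection into the universe of M, and let s be a finite subset of the universe of M. Then there is an elementary substructure X ≼ M whose universe contains s and such that the set Z = {α < κ : e(α) ∈ X} of ordinals below κ has order type exactly δ but δ is not a subset of Z (equivalently, Z ∩ δ has order type strictly less than δ). -/
open FirstOrder Cardinal Ordinal
open FirstOrder.Language.Structure

/-- The order type of a subset of a well-ordered type, as an ordinal. -/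
noncomputable def setOrderType {α : Type*} [LinearOrder α] [WellFoundedLT α]
    (s : Set α) : Ordinal :=
  Ordinal.type (Subrel ((· < ·) : α → α → Prop) (· ∈ s))

/-- The ordinal rank of an element of a well-ordered type. -/
noncomputable def ordRank {α : Type*} [LinearOrder α] [WellFoundedLT α] (a : α) : Ordinal :=
  @Ordinal.typein α (· < ·) isWellOrder_lt a

/-- `κ` is `δ`-Jónsson: every first-order structure in a countable language whose universe
is (a canonical type of order type) `κ` has an elementary substructure whose underlying set
has order type exactly `δ`. -/
def IsDeltaJonsson (δ κ : Cardinal.{0}) : Prop :=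
  ∀ (L : FirstOrder.Language.{0, 0}) [L.Structure κ.ord.ToType], Countable L.Symbols →
    ∃ X : L.ElementarySubstructure κ.ord.ToType,
      setOrderType (X : Set κ.ord.ToType) = δ.ord

def auxLang (C : Type) : FirstOrder.Language.{0, 0} where
  Functions n :=
    match n with
    | 0 => C
    | 1 => Bool
    | _ + 2 => Empty
  Relations _ := Empty

instance auxLang_rel_isEmpty (C : Type) (n : ℕ) : IsEmpty ((auxLang C).Relations n) :=
  inferInstanceAs (IsEmpty Empty)

instance auxLang_fun_countable (C : Type) [Countable C] (n : ℕ) :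
    Countable ((auxLang C).Functions n) :=
  match n with
  | 0 => inferInstanceAs (Countable C)
  | 1 => inferInstanceAs (Countable Bool)
  | _ + 2 => inferInstanceAs (Countable Empty)

lemma auxLang_symbols_countable (C : Type) [Countable C] :
    Countable (auxLang C).Symbols :=
  inferInstanceAs (Countable (_ ⊕ _))

lemma countable_sum_symbols {L L' : FirstOrder.Language.{0, 0}}
    (h : Countable L.Symbols) (h' : Countable L'.Symbols) :
    Countable (L.sum L').Symbols := by
  haveI := h; haveI := h'
  haveI hf : Countable (Σ l, L.Functions l) :=
    (Function.Injective.countable (f := (Sum.inl : _ → L.Symbols)) Sum.inl_injective)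
  haveI hf' : Countable (Σ l, L'.Functions l) :=
    (Function.Injective.countable (f := (Sum.inl : _ → L'.Symbols)) Sum.inl_injective)
  haveI hr : Countable (Σ l, L.Relations l) :=
    (Function.Injective.countable (f := (Sum.inr : _ → L.Symbols)) Sum.inr_injective)
  haveI hr' : Countable (Σ l, L'.Relations l) :=
    (Function.Injective.countable (f := (Sum.inr : _ → L'.Symbols)) Sum.inr_injective)
  haveI : Countable (Σ l, (L.sum L').Functions l) :=
    Countable.of_equiv _ (Equiv.sigmaSumDistrib (fun l => L.Functions l)
      (fun l => L'.Functions l)).symm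
  haveI : Countable (Σ l, (L.sum L').Relations l) :=
    Countable.of_equiv _ (Equiv.sigmaSumDistrib (fun l => L.Relations l)
      (fun l => L'.Relations l)).symm
  exact inferInstanceAs (Countable (_ ⊕ _))

def auxStructure {C T : Type} (c : C → T) (f₀ f₁ : T → T) : (auxLang C).Structure T where
  funMap {n} F x :=
    match n, F, x with
    | 0, a, _ => c a
    | 1, b, x => cond b (f₀ (x 0)) (f₁ (x 0))
    | _ + 2, F, _ => F.elim
  RelMap {_} R _ := R.elim

lemma setOrderType_mono {α : Type*} [LinearOrder α] [WellFoundedLT α] {s t : Set α}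
    (h : s ⊆ t) : setOrderType s ≤ setOrderType t :=
  RelEmbedding.ordinal_type_le ⟨⟨Set.inclusion h, Set.inclusion_injective h⟩, Iff.rfl⟩

/-- If `δ < κ` are infinite cardinals, `κ` is `δ`-Jónsson, `M` is a structure in a countable
language whose universe has cardinality `κ`, `e` is an injection of (a canonical copy of) `κ`
into `M`, and `s` is a finite subset of `M`, then there is an elementary substructure `X ≼ M`
containing `s` such that `Z = {α < κ : e α ∈ X}` has order type exactly `δ` but `δ ⊄ Z`. -/
theorem deltaJonsson_elementarySubstructure
    (δ κ : Cardinal.{0}) (hδ : ℵ₀ ≤ δ) (hδκ : δ < κ)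
    (hJ : IsDeltaJonsson δ κ)
    (L : FirstOrder.Language.{0, 0}) (hL : Countable L.Symbols)
    (M : Type) [L.Structure M] (hM : #M = κ)
    (e : κ.ord.ToType → M) (he : Function.Injective e)
    (s : Finset M) :
    ∃ X : L.ElementarySubstructure M,
      ↑s ⊆ (X : Set M) ∧
      setOrderType {α : κ.ord.ToType | e α ∈ X} = δ.ord ∧
      ¬ (∀ α : κ.ord.ToType, ordRank α < δ.ord → α ∈ {α : κ.ord.ToType | e α ∈ X}) := by
  classical
  haveI iwo : IsWellOrder κ.ord.ToType ((· < ·) : κ.ord.ToType → κ.ord.ToType → Prop) := isWellOrder_lt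
  have hκ0 : ℵ₀ ≤ κ := hδ.trans hδκ.le
  have hT : #κ.ord.ToType = κ := by rw [Cardinal.mk_toType, Cardinal.card_ord]
  obtain ⟨g⟩ : Nonempty (κ.ord.ToType ≃ M) := Cardinal.eq.mp (hT.trans hM.symm)
  have htype : Ordinal.type ((· < ·) : κ.ord.ToType → κ.ord.ToType → Prop) = κ.ord :=
    Ordinal.type_toType _
  have hδκo : δ.ord < κ.ord := Cardinal.ord_lt_ord.mpr hδκ
  have hβlt : δ.ord < Ordinal.type ((· < ·) : κ.ord.ToType → κ.ord.ToType → Prop) :=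
    by rw [htype]; exact hδκo
  set β : κ.ord.ToType := Ordinal.enum ((· < ·) : κ.ord.ToType → κ.ord.ToType → Prop) ⟨δ.ord, hβlt⟩ with hβdef
  have hβrank : Ordinal.typein ((· < ·) : κ.ord.ToType → κ.ord.ToType → Prop) β = δ.ord :=
    Ordinal.typein_enum _ _
  -- the auxiliary language
  set C := Option {x : M // x ∈ s} with hC
  let cI : C → κ.ord.ToType := fun c => c.elim β (fun x => g.symm x.1)
  let f0 : κ.ord.ToType → κ.ord.ToType := fun α => g.symm (e α)
  let f1 : κ.ord.ToType → κ.ord.ToType :=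
    fun α => if h : ∃ γ, e γ = g α then h.choose else α
  letI iLT : L.Structure κ.ord.ToType := Equiv.inducedStructure g.symm
  letI i0T : (auxLang C).Structure κ.ord.ToType := auxStructure cI f0 f1
  letI i0M : (auxLang C).Structure M := Equiv.inducedStructure (L := auxLang C) g
  -- the equivalence as a first-order equivalence
  let gE : @Language.Equiv (L.sum (auxLang C)) κ.ord.ToType M _ _ :=
    { g with
      map_fun' := by
        intro n F x
        cases F with
        | inl f =>
          show g (g.symm (funMap f (g.symm.symm ∘ x))) = funMap f (⇑g ∘ x)
          rw [Equiv.apply_symm_apply, Equiv.symm_symm]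
        | inr f =>
          show g (funMap f x) = g (funMap f (g.symm ∘ (⇑g ∘ x)))
          congr 1
          congr 1
          ext i
          simp
      map_rel' := by
        intro n R x
        cases R with
        | inl r =>
          show RelMap r (⇑g ∘ x) ↔ RelMap r (g.symm.symm ∘ x)
          rw [Equiv.symm_symm]
        | inr r => exact isEmptyElim r }
  haveI : Countable C := by
    rw [hC]; infer_instance
  have hcnt : Countable (L.sum (auxLang C)).Symbols :=
    countable_sum_symbols hL (auxLang_symbols_countable C)
  obtain ⟨X', hX'⟩ := hJ (L.sum (auxLang C)) hcnt
  -- membership facts in X'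
  have hmemf0 : ∀ {α : κ.ord.ToType}, α ∈ X' → f0 α ∈ X' := by
    intro α hα
    have := X'.toSubstructure.fun_mem (Sum.inr (show (auxLang C).Functions 1 from true))
      (fun _ => α) (fun _ => hα)
    exact this
  have hmemf1 : ∀ {γ : κ.ord.ToType}, γ ∈ X' → f1 γ ∈ X' := by
    intro γ hγ
    have := X'.toSubstructure.fun_mem (Sum.inr (show (auxLang C).Functions 1 from false))
      (fun _ => γ) (fun _ => hγ)
    exact this
  have hmemc : ∀ (c : C), cI c ∈ X' := by
    intro c
    have := X'.toSubstructure.fun_mem (Sum.inr (show (auxLang C).Functions 0 from c))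
      (fun i => i.elim0) (fun i => i.elim0)
    exact this
  -- the substructure of M
  let A : Set M := ⇑g '' (X' : Set κ.ord.ToType)
  have hmemA : ∀ {m : M}, m ∈ A ↔ g.symm m ∈ X' := by
    intro m
    constructor
    · rintro ⟨γ, hγ, rfl⟩; simpa using hγ
    · intro h; exact ⟨g.symm m, h, by simp⟩
  let Y : L.Substructure M :=
    { carrier := A
      fun_mem := by
        intro n f x hx
        have key : funMap f x =
            g (funMap (L := L.sum (auxLang C)) (Sum.inl f) (fun i => g.symm (x i))) := by
          show funMap f x = g (g.symm (funMap f (g.symm.symm ∘ fun i => g.symm (x i))))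
          rw [Equiv.apply_symm_apply, Equiv.symm_symm]
          congr 1
          ext i
          simp
        rw [key]
        exact ⟨_, X'.toSubstructure.fun_mem (Sum.inl f) _ (fun i => hmemA.mp (hx i)), rfl⟩ }
  -- Tarski–Vaught
  have htv : ∀ (n : ℕ) (φ : L.BoundedFormula Empty (n + 1)) (x : Fin n → Y) (a : M),
      φ.Realize default (Fin.snoc ((↑) ∘ x) a : _ → M) →
      ∃ b : Y, φ.Realize default (Fin.snoc ((↑) ∘ x) b : _ → M) := by
    intro n φ x a h
    set φ' := (Language.LHom.sumInl : L →ᴸ L.sum (auxLang C)).onBoundedFormula φ with hφ'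
    have hgE : ∀ (v : Fin (n + 1) → κ.ord.ToType),
        φ'.Realize (M := M) default (⇑g ∘ v) ↔ φ'.Realize (M := κ.ord.ToType) default v := by
      intro v
      have := gE.toElementaryEmbedding.map_boundedFormula φ' default v
      rwa [Subsingleton.elim (⇑gE.toElementaryEmbedding ∘ default) default] at this
    have h1 : φ'.Realize (M := M) default (Fin.snoc ((↑) ∘ x) a) :=
      (Language.LHom.realize_onBoundedFormula _ _).mpr h
    let y : Fin n → κ.ord.ToType := fun i => g.symm ((x i : M))
    have hy : ∀ i, y i ∈ X' := fun i => hmemA.mp (x i).2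
    have hgy : ⇑g ∘ y = ((↑) ∘ x : Fin n → M) := by ext i; simp [y]
    have h2 : φ'.Realize (M := κ.ord.ToType) default (Fin.snoc y (g.symm a)) := by
      rw [← hgE]
      rwa [Fin.comp_snoc, hgy, Equiv.apply_symm_apply]
    have h3 : φ'.ex.Realize (M := κ.ord.ToType) default y :=
      Language.BoundedFormula.realize_ex.mpr ⟨g.symm a, h2⟩
    let y' : Fin n → X' := fun i => ⟨y i, hy i⟩
    have hsuby : (X'.subtype : X' → κ.ord.ToType) ∘ y' = y := rfl
    have h4 : φ'.ex.Realize (M := X') default y' := by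
      have := X'.subtype.map_boundedFormula φ'.ex default y'
      rw [Subsingleton.elim ((X'.subtype : X' → κ.ord.ToType) ∘ default) default,
        hsuby] at this
      exact this.mp h3
    obtain ⟨b1, h5⟩ := Language.BoundedFormula.realize_ex.mp h4
    have h6 : φ'.Realize (M := κ.ord.ToType) default (Fin.snoc y (b1 : κ.ord.ToType)) := by
      have := X'.subtype.map_boundedFormula φ' default (Fin.snoc y' b1)
      rw [Subsingleton.elim ((X'.subtype : X' → κ.ord.ToType) ∘ default) default,
        Fin.comp_snoc, hsuby] at this
      exact this.mpr h5
    have h7 : φ'.Realize (M := M) default (Fin.snoc ((↑) ∘ x) (g (b1 : κ.ord.ToType))) := by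
      have := (hgE (Fin.snoc y (b1 : κ.ord.ToType))).mpr h6
      rwa [Fin.comp_snoc, hgy] at this
    have h8 : φ.Realize (M := M) default (Fin.snoc ((↑) ∘ x) (g (b1 : κ.ord.ToType))) :=
      (Language.LHom.realize_onBoundedFormula _ _).mp h7
    exact ⟨⟨g (b1 : κ.ord.ToType), ⟨(b1 : κ.ord.ToType), b1.2, rfl⟩⟩, h8⟩
  let X : L.ElementarySubstructure M := Y.toElementarySubstructure htv
  have hXA : ∀ m : M, m ∈ X ↔ m ∈ A := fun m => Iff.rfl
  -- Z = X'
  have hZeq : {α : κ.ord.ToType | e α ∈ X} = (X' : Set κ.ord.ToType) := by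
    ext α
    simp only [Set.mem_setOf_eq, hXA, hmemA, SetLike.mem_coe]
    constructor
    · intro hα
      have h1 : f1 (g.symm (e α)) ∈ X' := hmemf1 hα
      have hex : ∃ γ, e γ = g (g.symm (e α)) := ⟨α, by simp⟩
      have h2 : f1 (g.symm (e α)) = hex.choose := dif_pos hex
      have h3 : e hex.choose = e α := by
        have := hex.choose_spec; simpa using this
      rw [h2, he h3] at h1
      exact h1
    · intro hα
      have := hmemf0 hα
      show g.symm (e α) ∈ X'
      exact this
  refine ⟨X, ?_, ?_, ?_⟩
  · intro x hx
    have hx' : x ∈ s := by simpa using hx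
    have : cI (some ⟨x, hx'⟩) ∈ X' := hmemc (some ⟨x, hx'⟩)
    have h2 : g.symm x ∈ X' := this
    exact hmemA.mpr h2
  · rw [hZeq]; exact hX'
  · intro hall
    have hβX : β ∈ X' := hmemc none
    have hsucc : δ.ord + 1 < κ.ord := by
      rw [Ordinal.add_one_eq_succ]
      exact (Cardinal.isSuccLimit_ord hκ0).succ_lt hδκo
    have hβ₂lt : δ.ord + 1 < Ordinal.type ((· < ·) : κ.ord.ToType → κ.ord.ToType → Prop) := by
      rw [htype]; exact hsucc
    set β₂ : κ.ord.ToType :=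
      Ordinal.enum ((· < ·) : κ.ord.ToType → κ.ord.ToType → Prop) ⟨δ.ord + 1, hβ₂lt⟩ with hβ₂def
    have hβ₂rank : Ordinal.typein ((· < ·) : κ.ord.ToType → κ.ord.ToType → Prop) β₂ =
        δ.ord + 1 := Ordinal.typein_enum _ _
    have hsub : Set.Iio β₂ ⊆ {α : κ.ord.ToType | e α ∈ X} := by
      intro γ hγ
      have h1 : Ordinal.typein ((· < ·) : κ.ord.ToType → κ.ord.ToType → Prop) γ <
          δ.ord + 1 := by
        rw [← hβ₂rank]
        exact (Ordinal.typein_lt_typein _).mpr hγ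
      have h2 : Ordinal.typein ((· < ·) : κ.ord.ToType → κ.ord.ToType → Prop) γ ≤ δ.ord := by
        rwa [Ordinal.add_one_eq_succ, Order.lt_succ_iff] at h1
      rcases h2.lt_or_eq with h3 | h3
      · exact hall γ h3
      · have h4 : Ordinal.typein ((· < ·) : κ.ord.ToType → κ.ord.ToType → Prop) γ =
            Ordinal.typein ((· < ·) : κ.ord.ToType → κ.ord.ToType → Prop) β := by
          rw [h3]; exact hβrank.symm
        have h5 : γ = β := (Ordinal.typein_inj _).mp h4
        show e γ ∈ X
        rw [h5]
        have : β ∈ {α : κ.ord.ToType | e α ∈ X} := by rw [hZeq]; exact hβX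
        exact this
    have hle : setOrderType (Set.Iio β₂) ≤ setOrderType {α : κ.ord.ToType | e α ∈ X} :=
      setOrderType_mono hsub
    have hIio : setOrderType (Set.Iio β₂) = δ.ord + 1 := by
      rw [← hβ₂rank]; rfl
    rw [hIio, hZeq, hX'] at hle
    rw [Ordinal.add_one_eq_succ] at hle
    exact (Order.lt_succ δ.ord).not_ge hle
end

section
/- Let κ be an infinite cardinal, let L be a countable first-order language, let M be an L-structure, let f : κ → M be a bijection from κ onto the universe of M, let c : κ → M be an injection into the universe of M, and let s be a finite subset of the universe of M. Then there exist a countable first-order language L′ and an L′-structure B with universe κ such that for every set Z ⊆ κ that is the universe of an elementary substructure of B: the image f″Z is the universe of an elementary substructure of M, s ⊆ f″Z, and for every α < κ one has c(α) ∈ f″Z if and only if α ∈ Z. -/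
open FirstOrder Cardinal Ordinal

namespace CodingAux

open FirstOrder.Language

/-- The extra language: constants for elements of `s` and two unary function symbols. -/
def extraLang {M : Type} (s : Finset M) : FirstOrder.Language.{0, 0} :=
  ⟨fun n => match n with | 0 => ↥s | 1 => Bool | _ => Empty, fun _ => Empty⟩

instance extraLang_funCountable {M : Type} (s : Finset M) (n : ℕ) :
    Countable ((extraLang s).Functions n) := by
  match n with
  | 0 => exact inferInstanceAs (Countable ↥s)
  | 1 => exact inferInstanceAs (Countable Bool)
  | (n + 2) => exact inferInstanceAs (Countable Empty)

instance extraLang_relCountable {M : Type} (s : Finset M) (n : ℕ) :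
    Countable ((extraLang s).Relations n) :=
  inferInstanceAs (Countable Empty)

/-- The structure on `N` for the extra language. -/
def extraStructure {M N : Type} (s : Finset M) (e : N ≃ M) (g h : N → N) :
    (extraLang s).Structure N where
  funMap {n} F x :=
    match n, F, x with
    | 0, F, _ => e.symm F.1
    | 1, true, x => g (x 0)
    | 1, false, x => h (x 0)
    | (_ + 2), F, _ => F.elim
  RelMap {n} R _ := R.elim

/-- The constant symbol for `x ∈ s`. -/
def constSym {M : Type} {s : Finset M} (x : ↥s) : (extraLang s).Functions 0 := x

/-- The unary symbol for `g`. -/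
def gSym {M : Type} (s : Finset M) : (extraLang s).Functions 1 := true

/-- The unary symbol for `h`. -/
def hSym {M : Type} (s : Finset M) : (extraLang s).Functions 1 := false

theorem extra_const {M N : Type} (s : Finset M) (e : N ≃ M) (g h : N → N) (F : ↥s)
    (x : Fin 0 → N) :
    @Structure.funMap (extraLang s) N (extraStructure s e g h) 0 F x = e.symm F.1 := rfl

theorem extra_true {M N : Type} (s : Finset M) (e : N ≃ M) (g h : N → N) (x : Fin 1 → N) :
    @Structure.funMap (extraLang s) N (extraStructure s e g h) 1 true x = g (x 0) := rfl

theorem extra_false {M N : Type} (s : Finset M) (e : N ≃ M) (g h : N → N) (x : Fin 1 → N) :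
    @Structure.funMap (extraLang s) N (extraStructure s e g h) 1 false x = h (x 0) := rfl

end CodingAux

open CodingAux FirstOrder.Language in
/-- Given an infinite cardinal `κ`, a structure `M` in a countable language `L` together with a
bijection `f : κ → M`, an injection `c : κ → M` (a designated copy of `κ` inside `M`), and a
finite subset `s` of `M`, there are a countable language `L'` and an `L'`-structure `B` with
universe `κ` such that for every `Z ⊆ κ` which is the universe of an elementary substructure
of `B`, the image `f '' Z` is the universe of an elementary substructure of `M`, `s ⊆ f '' Z`,
and for every `α < κ` we have `c α ∈ f '' Z ↔ α ∈ Z`. -/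
theorem coding_structure_exists
    (κ : Cardinal.{0}) (hκ : ℵ₀ ≤ κ)
    (L : FirstOrder.Language.{0, 0}) (hL : Countable L.Symbols)
    (M : Type) [L.Structure M]
    (f : κ.ord.ToType → M) (hf : Function.Bijective f)
    (c : κ.ord.ToType → M) (hc : Function.Injective c)
    (s : Finset M) :
    ∃ (L' : FirstOrder.Language.{0, 0}) (_ : Countable L'.Symbols)
      (B : L'.Structure κ.ord.ToType),
      ∀ Z : Set κ.ord.ToType,
        (∃ Y : @FirstOrder.Language.ElementarySubstructure L' κ.ord.ToType B,
            (Y : Set κ.ord.ToType) = Z) →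
        (∃ X : L.ElementarySubstructure M, (X : Set M) = f '' Z) ∧
        ↑s ⊆ f '' Z ∧
        ∀ α : κ.ord.ToType, c α ∈ f '' Z ↔ α ∈ Z := by
  classical
  have hne : Nonempty κ.ord.ToType := by
    refine Ordinal.toType_nonempty_iff_ne_zero.2 (fun h0 => ?_)
    have h1 : (0 : Ordinal) < κ.ord := by
      calc (0 : Ordinal) < Ordinal.omega0 := Ordinal.omega0_pos
        _ = (ℵ₀ : Cardinal).ord := (Cardinal.ord_aleph0).symm
        _ ≤ κ.ord := Cardinal.ord_le_ord.2 hκ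
    exact absurd h0 (ne_of_gt h1)
  let N : Type := κ.ord.ToType
  let e : N ≃ M := Equiv.ofBijective f hf
  let g : N → N := fun α => e.symm (c α)
  have hg : Function.Injective g := fun a b hab => hc (e.symm.injective hab)
  let h : N → N := Function.invFun g
  have hgh : ∀ α, h (g α) = α := fun α => Function.leftInverse_invFun hg α
  letI SN : L.Structure N := Equiv.inducedStructure (L := L) e.symm
  letI S₂ : (extraLang s).Structure N := extraStructure s e g h
  refine ⟨L.sum (extraLang s), ?_, Language.sumStructure _ _ N, ?_⟩
  · -- countability
    haveI hF : ∀ n, Countable (L.Functions n) := fun n => by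
      have : Function.Injective (fun F : L.Functions n => (Sum.inl ⟨n, F⟩ : L.Symbols)) := by
        intro a b hab
        simpa using hab
      exact this.countable
    haveI hR : ∀ n, Countable (L.Relations n) := fun n => by
      have : Function.Injective (fun R : L.Relations n => (Sum.inr ⟨n, R⟩ : L.Symbols)) := by
        intro a b hab
        simpa using hab
      exact this.countable
    haveI : ∀ n, Countable ((L.sum (extraLang s)).Functions n) := fun n =>
      inferInstanceAs (Countable (L.Functions n ⊕ (extraLang s).Functions n))
    haveI : ∀ n, Countable ((L.sum (extraLang s)).Relations n) := fun n =>
      inferInstanceAs (Countable (L.Relations n ⊕ (extraLang s).Relations n))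
    exact inferInstanceAs (Countable ((Σ l, (L.sum (extraLang s)).Functions l) ⊕
      (Σ l, (L.sum (extraLang s)).Relations l)))
  · rintro Z ⟨Y, rfl⟩
    set Z : Set N := (Y : Set N) with hZ
    -- closure of Y under functions
    have hclosed : ∀ {n : ℕ} (F : (L.sum (extraLang s)).Functions n) (x : Fin n → N),
        (∀ i, x i ∈ Z) → Structure.funMap F x ∈ Z := by
      intro n F x hx
      exact Y.toSubstructure.fun_mem F x hx
    -- the equivalence as an L-equivalence
    let w : M ≃[L] N := Equiv.inducedStructureEquiv (L := L) e.symm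
    have hw : ∀ m : M, w m = e.symm m := fun m => rfl
    have hwsymm : ∀ x : N, w.symm x = f x := fun x => rfl
    let u : M ↪ₑ[L] N := w.toElementaryEmbedding
    let v : N ↪ₑ[L] M := w.symm.toElementaryEmbedding
    have hu : ∀ m : M, u m = e.symm m := fun m => rfl
    have hv : ∀ x : N, v x = f x := fun x => rfl
    -- the substructure of M with carrier f '' Z
    have hfun : ∀ {n : ℕ} (F : L.Functions n), Language.ClosedUnder F (f '' Z) := by
      intro n F x hx
      choose z hz hfz using hx
      have hmem : Structure.funMap (L := L) F z ∈ Z := by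
        have := hclosed (Sum.inl F) z hz
        exact this
      refine ⟨Structure.funMap (L := L) F z, hmem, ?_⟩
      have := w.symm.map_fun F z
      rw [hwsymm] at this
      rw [this]
      congr 1
      funext i
      exact hfz i
    let S : L.Substructure M := ⟨f '' Z, hfun⟩
    have TV : ∀ (n : ℕ) (φ : L.BoundedFormula Empty (n + 1)) (x : Fin n → S) (a : M),
        φ.Realize default (Fin.snoc ((↑) ∘ x) a : _ → M) →
          ∃ b : S, φ.Realize default (Fin.snoc ((↑) ∘ x) b : _ → M) := by
      intro n φ x a hφ
      have hx : ∀ i, ((x i : M) ∈ f '' Z) := fun i => (x i).2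
      choose z hz hfz using hx
      let y : Fin n → Y := fun i => ⟨z i, hz i⟩
      -- transfer to N
      have h1 : φ.Realize (u ∘ default) (u ∘ Fin.snoc ((↑) ∘ x) a) :=
        (u.map_boundedFormula φ default _).2 hφ
      rw [Fin.comp_snoc] at h1
      have hud : (u ∘ default : Empty → N) = default := Subsingleton.elim _ _
      rw [hud] at h1
      have hyx : (u ∘ ((↑) ∘ x) : Fin n → N) = Subtype.val ∘ y := by
        funext i
        show u (x i : M) = z i
        rw [hu, ← hfz i]
        exact e.symm_apply_apply (z i)
      rw [hyx] at h1
      -- transfer to L'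
      let ψ : (L.sum (extraLang s)).BoundedFormula Empty (n + 1) :=
        (LHom.sumInl : L →ᴸ L.sum (extraLang s)).onBoundedFormula φ
      have h2 : ψ.Realize default (Fin.snoc (Subtype.val ∘ y) (u a)) :=
        (LHom.realize_onBoundedFormula _ φ).2 h1
      have h3 : ψ.ex.Realize (default : Empty → N) (Subtype.val ∘ y) :=
        (BoundedFormula.realize_ex).2 ⟨u a, h2⟩
      -- down into Y
      have h4 : ψ.ex.Realize (default : Empty → ↥Y) y := by
        refine (Y.subtype.map_boundedFormula ψ.ex default y).1 ?_
        convert h3 using 2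
        rfl
      obtain ⟨b, hb⟩ := (BoundedFormula.realize_ex).1 h4
      -- back up to N
      have h5 : ψ.Realize (default : Empty → N) (Fin.snoc (Subtype.val ∘ y) (b : N)) := by
        have h5' := (Y.subtype.map_boundedFormula ψ default (Fin.snoc y b)).2 hb
        convert h5' using 2
        exact (Fin.comp_snoc _ _ _).symm
      have h6 : φ.Realize (default : Empty → N) (Fin.snoc (Subtype.val ∘ y) (b : N)) :=
        (LHom.realize_onBoundedFormula _ φ).1 h5
      -- back to M
      have h7 : φ.Realize (default : Empty → M) (Fin.snoc ((↑) ∘ x) (f (b : N))) := by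
        have h7' := (v.map_boundedFormula φ default (Fin.snoc (Subtype.val ∘ y) (b : N))).2 h6
        convert h7' using 2
        rw [Fin.comp_snoc]
        have hxy : ((↑) ∘ x : Fin n → M) = ⇑v ∘ (Subtype.val ∘ y) := by
          funext i
          show (x i : M) = v (z i)
          rw [hv, hfz i]
        rw [hxy]
        rfl
      exact ⟨⟨f (b : N), ⟨(b : N), b.2, rfl⟩⟩, h7⟩
    refine ⟨⟨S.toElementarySubstructure TV, rfl⟩, ?_, ?_⟩
    · -- s ⊆ f '' Z
      intro m hm
      have hmem : e.symm m ∈ Z := by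
        have := hclosed (n := 0) (Sum.inr (constSym ⟨m, hm⟩)) finZeroElim (fun i => i.elim0)
        rw [show (Structure.funMap (L := L.sum (extraLang s))
            (Sum.inr (constSym ⟨m, hm⟩)) finZeroElim) = e.symm m from rfl] at this
        exact this
      exact ⟨e.symm m, hmem, e.apply_symm_apply m⟩
    · intro α
      constructor
      · rintro ⟨β, hβ, hfb⟩
        have hβg : β = g α := by
          have : e β = c α := hfb
          have := congrArg e.symm this
          rwa [e.symm_apply_apply] at this
        have hmem : h β ∈ Z := by
          have := hclosed (n := 1) (Sum.inr (hSym s)) (fun _ => β) (fun _ => hβ)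
          rw [show (Structure.funMap (L := L.sum (extraLang s))
              (Sum.inr (hSym s)) (fun _ => β)) = h β from rfl] at this
          exact this
        rwa [hβg, hgh α] at hmem
      · intro hα
        have hmem : g α ∈ Z := by
          have := hclosed (n := 1) (Sum.inr (gSym s)) (fun _ => α) (fun _ => hα)
          rw [show (Structure.funMap (L := L.sum (extraLang s))
              (Sum.inr (gSym s)) (fun _ => α)) = g α from rfl] at this
          exact this
        exact ⟨g α, hmem, e.apply_symm_apply (c α)⟩
end
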